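/- arXiv:math/0703675 — 2 statements merged into one kernel-verified Lean document; each statement's English description precedes it below -/
import Mathlib

section
/- Suppose the measurable map M : Ω → (d×d matrices) takes values in the set of stochastic matrices, and that p({ω : all entries of M(ω) are strictly positive}) > 0. Then there exist α > 0, a measurable set Ω₄ ⊆ Ω^{ℕ*} with ℙ(Ω₄) = 1, and a measurable vector-valued map η_∞ : Ω^{ℕ*} → ℂ^d such that for every ω̄ ∈ Ω₄ there is a constant C_ω̄ with: for all n ≥ 1, ‖M(ωₙ) M(ω_{n−1}) ⋯ M(ω₁) − |ψ_S⟩⟨η_∞(ω̄)|‖ ≤ C_ω̄ e^{−α n}. -/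
open MeasureTheory Filter Matrix
open scoped BigOperators

namespace RRDO

/-- Euclidean inner product on `Fin d → ℂ`, antilinear in the first argument. -/
noncomputable def einner {d : ℕ} (φ χ : Fin d → ℂ) : ℂ :=
  ∑ i, starRingEnd ℂ (φ i) * χ i

/-- Euclidean norm on `Fin d → ℂ`. -/
noncomputable def evnorm {d : ℕ} (v : Fin d → ℂ) : ℝ :=
  Real.sqrt (∑ i, ‖v i‖ ^ 2)

/-- The rank-one operator `|ψ⟩⟨φ|`, sending `χ` to `⟨φ, χ⟩ ψ`. -/
noncomputable def ketbra {d : ℕ} (ψ φ : Fin d → ℂ) : Matrix (Fin d) (Fin d) ℂ :=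
  Matrix.of fun i j => ψ i * starRingEnd ℂ (φ j)

/-- Operator norm of a matrix induced by the Euclidean vector norm. -/
noncomputable def opNorm {d : ℕ} (A : Matrix (Fin d) (Fin d) ℂ) : ℝ :=
  ⨆ v : {v : Fin d → ℂ // evnorm v ≤ 1}, evnorm (A.mulVec v)

/-- The spectral projection of `M` for the eigenvalue 1: the projection onto
`ker ((M-1)^d)` along `range ((M-1)^d)`. -/
noncomputable def specProj {d : ℕ} (M : Matrix (Fin d) (Fin d) ℂ) :
    Matrix (Fin d) (Fin d) ℂ :=
  letI := Classical.dec (IsCompl (LinearMap.ker ((M - 1) ^ d).mulVecLin)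
      (LinearMap.range ((M - 1) ^ d).mulVecLin))
  if h : IsCompl (LinearMap.ker ((M - 1) ^ d).mulVecLin)
      (LinearMap.range ((M - 1) ^ d).mulVecLin) then
    LinearMap.toMatrix'
      ((LinearMap.ker ((M - 1) ^ d).mulVecLin).subtype ∘ₗ
        Submodule.linearProjOfIsCompl _ _ h)
  else 0

/-- The set `M_(E)` of matrices whose spectrum meets the unit circle exactly in `{1}`,
with `1` an eigenvalue of algebraic multiplicity one. -/
def MsetE (d : ℕ) : Set (Matrix (Fin d) (Fin d) ℂ) :=
  {M | spectrum ℂ M ∩ {z : ℂ | ‖z‖ = 1} = {1} ∧ M.charpoly.rootMultiplicity 1 = 1}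

/-- `ψ(M) = P₁(M)* ψS`. -/
noncomputable def psiv {d : ℕ} (ψS : Fin d → ℂ) (A : Matrix (Fin d) (Fin d) ℂ) :
    Fin d → ℂ :=
  ((specProj A)ᴴ).mulVec ψS

/-- `M_Q = Q M Q` where `Q = 1 - |ψS⟩⟨ψ(M)|`. -/
noncomputable def MQm {d : ℕ} (ψS : Fin d → ℂ) (A : Matrix (Fin d) (Fin d) ℂ) :
    Matrix (Fin d) (Fin d) ℂ :=
  (1 - ketbra ψS (psiv ψS A)) * A * (1 - ketbra ψS (psiv ψS A))

/-- The ordered product `A 0 * A 1 * ⋯ * A (n-1)`. -/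
noncomputable def fwdProd {d : ℕ} (A : ℕ → Matrix (Fin d) (Fin d) ℂ) (n : ℕ) :
    Matrix (Fin d) (Fin d) ℂ :=
  ((List.range n).map A).prod

/-- The reversed ordered product `A (n-1) * ⋯ * A 1 * A 0`. -/
noncomputable def bwdProd {d : ℕ} (A : ℕ → Matrix (Fin d) (Fin d) ℂ) (n : ℕ) :
    Matrix (Fin d) (Fin d) ℂ :=
  (((List.range n).reverse).map A).prod

/-- `thetaSeq A ψS n` is `θ_{n+1} = A(n)* ⋯ A(1)* ψ(A 0)` (0-indexed). -/
noncomputable def thetaSeq {d : ℕ} (A : ℕ → Matrix (Fin d) (Fin d) ℂ) (ψS : Fin d → ℂ) :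
    ℕ → (Fin d → ℂ)
  | 0 => psiv ψS (A 0)
  | n + 1 => ((A (n + 1))ᴴ).mulVec (thetaSeq A ψS n)

/-- `P` is the infinite i.i.d. product measure built from `p` on sequence space. -/
def IsIIDproduct {Ω : Type*} [MeasurableSpace Ω] (p : Measure Ω)
    (P : Measure (ℕ → Ω)) : Prop :=
  ∀ (n : ℕ) (A : ℕ → Set Ω), (∀ i, MeasurableSet (A i)) →
    P {ω' : ℕ → Ω | ∀ i < n, ω' i ∈ A i} = ∏ i ∈ Finset.range n, p (A i)

/-- Entrywise expectation of a random matrix. -/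
noncomputable def Ematrix {Ω : Type*} [MeasurableSpace Ω] (p : Measure Ω) {d : ℕ}
    (M : Ω → Matrix (Fin d) (Fin d) ℂ) : Matrix (Fin d) (Fin d) ℂ :=
  Matrix.of fun i j => ∫ ω, M ω i j ∂p

/-- Entrywise expectation of a random vector. -/
noncomputable def Evec {Ω : Type*} [MeasurableSpace Ω] (p : Measure Ω) {d : ℕ}
    (v : Ω → Fin d → ℂ) : Fin d → ℂ :=
  fun i => ∫ ω, v ω i ∂p

/-- Assumption (RE) with constants `C, α`. -/
def AssumptionRE {Ω : Type*} [MeasurableSpace Ω] {d : ℕ}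
    (M : Ω → Matrix (Fin d) (Fin d) ℂ) (ψS : Fin d → ℂ)
    (P : Measure (ℕ → Ω)) (C α : ℝ) : Prop :=
  0 < C ∧ 0 < α ∧ ∃ Ωt : Set (ℕ → Ω), MeasurableSet Ωt ∧ P Ωt = 1 ∧
    ∀ ω' ∈ Ωt,
      (∃ n₀ : ℕ, ∀ n ≥ n₀,
        opNorm (fwdProd (fun i => MQm ψS (M (ω' i))) n) ≤ C * Real.exp (-α * n)) ∧
      ∀ n : ℕ, opNorm (fwdProd (fun i => MQm ψS (M (ω' i))) n) ≤ C





lemma evnorm_nonneg {d : ℕ} (v : Fin d → ℂ) : 0 ≤ evnorm v := Real.sqrt_nonneg _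

lemma evnorm_zero {d : ℕ} : evnorm (0 : Fin d → ℂ) = 0 := by
  simp [evnorm]

lemma opNorm_nonneg {d : ℕ} (A : Matrix (Fin d) (Fin d) ℂ) : 0 ≤ opNorm A :=
  Real.iSup_nonneg fun v => evnorm_nonneg _

lemma entry_le_evnorm {d : ℕ} (v : Fin d → ℂ) (j : Fin d) : ‖v j‖ ≤ evnorm v := by
  rw [evnorm, show ‖v j‖ = Real.sqrt (‖v j‖ ^ 2) by
    rw [Real.sqrt_sq (norm_nonneg _)]]
  exact Real.sqrt_le_sqrt (Finset.single_le_sum (f := fun i => ‖v i‖ ^ 2)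
    (fun i _ => sq_nonneg _) (Finset.mem_univ j))

lemma opNorm_le_of_entries {d : ℕ} {A : Matrix (Fin d) (Fin d) ℂ} {B : ℝ}
    (hB : 0 ≤ B) (h : ∀ i j, ‖A i j‖ ≤ B) :
    opNorm A ≤ d * Real.sqrt d * B := by
  have hne : Nonempty {v : Fin d → ℂ // evnorm v ≤ 1} :=
    ⟨⟨0, by rw [evnorm_zero]; norm_num⟩⟩
  refine ciSup_le fun ⟨v, hv⟩ => ?_
  have hentry : ∀ i, ‖A.mulVec v i‖ ≤ d * B := by
    intro i
    calc ‖∑ j, A i j * v j‖ ≤ ∑ j, ‖A i j * v j‖ := norm_sum_le _ _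
      _ ≤ ∑ _j : Fin d, B := by
          refine Finset.sum_le_sum fun j _ => ?_
          rw [norm_mul]
          calc ‖A i j‖ * ‖v j‖ ≤ B * 1 := by
                refine mul_le_mul (h i j) ?_ (norm_nonneg _) hB
                exact (entry_le_evnorm v j).trans hv
            _ = B := mul_one B
      _ = d * B := by simp [mul_comm]
  have : evnorm (A.mulVec v) ≤ Real.sqrt (∑ _i : Fin d, (d * B) ^ 2) := by
    refine Real.sqrt_le_sqrt (Finset.sum_le_sum fun i _ => ?_)
    exact pow_le_pow_left₀ (norm_nonneg _) (hentry i) 2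
  refine this.trans ?_
  rw [Finset.sum_const, Finset.card_univ, Fintype.card_fin, nsmul_eq_mul]
  rw [show (d : ℝ) * (↑d * B) ^ 2 = (Real.sqrt d * (d * B))^2 by
    linear_combination (-((d:ℝ)*B)^2) * Real.sq_sqrt (show (0:ℝ) ≤ d by positivity)]
  rw [Real.sqrt_sq (by positivity)]
  ring_nf
  exact le_refl _

lemma bwdProd_zero {d : ℕ} (A : ℕ → Matrix (Fin d) (Fin d) ℂ) : bwdProd A 0 = 1 := rfl

lemma bwdProd_succ {d : ℕ} (A : ℕ → Matrix (Fin d) (Fin d) ℂ) (n : ℕ) :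
    bwdProd A (n + 1) = A n * bwdProd A n := by
  simp [bwdProd, List.range_succ]

lemma bwdProd_add {d : ℕ} (A : ℕ → Matrix (Fin d) (Fin d) ℂ) (n m : ℕ) :
    bwdProd A (n + m) = bwdProd (fun i => A (n + i)) m * bwdProd A n := by
  induction m with
  | zero => simp [bwdProd_zero]
  | succ m ih => rw [← Nat.add_assoc, bwdProd_succ, ih, bwdProd_succ, Matrix.mul_assoc]


def IsStochC {d : ℕ} (A : Matrix (Fin d) (Fin d) ℂ) : Prop :=
  (∀ i j, (A i j).im = 0 ∧ 0 ≤ (A i j).re) ∧ ∀ i, ∑ j, A i j = 1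

lemma IsStochC.rowsum_re {d : ℕ} {A : Matrix (Fin d) (Fin d) ℂ} (hA : IsStochC A)
    (i : Fin d) : ∑ j, (A i j).re = 1 := by
  have := congrArg Complex.re (hA.2 i)
  simpa [Complex.re_sum] using this

lemma IsStochC.entry_le_one {d : ℕ} {A : Matrix (Fin d) (Fin d) ℂ} (hA : IsStochC A)
    (i j : Fin d) : (A i j).re ≤ 1 := by
  rw [← hA.rowsum_re i]
  exact Finset.single_le_sum (fun k _ => (hA.1 i k).2) (Finset.mem_univ j)

lemma IsStochC.one {d : ℕ} : IsStochC (1 : Matrix (Fin d) (Fin d) ℂ) := by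
  constructor
  · intro i j
    by_cases h : i = j <;> simp [Matrix.one_apply, h]
  · intro i
    simp [Matrix.one_apply]

lemma IsStochC.mul {d : ℕ} {A B : Matrix (Fin d) (Fin d) ℂ} (hA : IsStochC A)
    (hB : IsStochC B) : IsStochC (A * B) := by
  constructor
  · intro i j
    rw [Matrix.mul_apply]
    constructor
    · rw [Complex.im_sum]
      refine Finset.sum_eq_zero fun k _ => ?_
      rw [Complex.mul_im, (hA.1 i k).1, (hB.1 k j).1]
      ring
    · rw [Complex.re_sum]
      refine Finset.sum_nonneg fun k _ => ?_
      rw [Complex.mul_re, (hA.1 i k).1, (hB.1 k j).1]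
      simpa using mul_nonneg (hA.1 i k).2 (hB.1 k j).2
  · intro i
    rw [show ∑ j, (A * B) i j = ∑ j, ∑ k, A i k * B k j from
      Finset.sum_congr rfl fun j _ => Matrix.mul_apply]
    rw [Finset.sum_comm]
    calc ∑ k, ∑ j, A i k * B k j = ∑ k, A i k * ∑ j, B k j := by
          simp [Finset.mul_sum]
      _ = ∑ k, A i k := by
          refine Finset.sum_congr rfl fun k _ => ?_
          rw [hB.2 k, mul_one]
      _ = 1 := hA.2 i

lemma mul_apply_re {d : ℕ} {A B : Matrix (Fin d) (Fin d) ℂ}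
    (hA : ∀ i j, (A i j).im = 0) (hB : ∀ i j, (B i j).im = 0) (i j : Fin d) :
    ((A * B) i j).re = ∑ k, (A i k).re * (B k j).re := by
  rw [Matrix.mul_apply, Complex.re_sum]
  refine Finset.sum_congr rfl fun k _ => ?_
  rw [Complex.mul_re, hA i k, hB k j]
  ring

/-- Core oscillation contraction: if pairwise column differences of `P` are `≤ D`,
and the "positive part" of each row difference of `A` is `≤ c`, then
pairwise column differences of `A * P` are `≤ c * D`. -/
lemma contract_core {d : ℕ} (hd : 0 < d) {A P : Matrix (Fin d) (Fin d) ℂ}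
    (hA : IsStochC A) (hP : IsStochC P) {D c : ℝ} (hD : 0 ≤ D)
    (hdiff : ∀ i i' j, (P i j).re - (P i' j).re ≤ D)
    (hc : ∀ i i', ∑ k ∈ Finset.univ.filter
        (fun k => (A i' k).re ≤ (A i k).re), ((A i k).re - (A i' k).re) ≤ c) :
    ∀ i i' j, ((A * P) i j).re - ((A * P) i' j).re ≤ c * D := by
  intro i i' j
  have hre := fun a b => mul_apply_re (fun i j => (hA.1 i j).1) (fun i j => (hP.1 i j).1) a b
  rw [hre i j, hre i' j, ← Finset.sum_sub_distrib]
  have : ∀ k, (A i k).re * (P k j).re - (A i' k).re * (P k j).re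
      = ((A i k).re - (A i' k).re) * (P k j).re := fun k => by ring
  simp_rw [this]
  -- pick k₀ minimizing x k = (P k j).re
  haveI : Nonempty (Fin d) := Fin.pos_iff_nonempty.mp hd
  obtain ⟨k₀, -, hk₀⟩ := Finset.exists_min_image Finset.univ (fun k => (P k j).re)
    ⟨Classical.arbitrary (Fin d), Finset.mem_univ _⟩
  set w : Fin d → ℝ := fun k => (A i k).re - (A i' k).re with hw
  have hwsum : ∑ k, w k = 0 := by
    rw [Finset.sum_sub_distrib, hA.rowsum_re i, hA.rowsum_re i']; ring
  have key : ∑ k, w k * (P k j).re = ∑ k, w k * ((P k j).re - (P k₀ j).re) := by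
    simp_rw [mul_sub]
    rw [Finset.sum_sub_distrib, ← Finset.sum_mul, hwsum, zero_mul, sub_zero]
  rw [key]
  set Kp := Finset.univ.filter (fun k => (A i' k).re ≤ (A i k).re) with hKp
  have hsplit : ∑ k, w k * ((P k j).re - (P k₀ j).re)
      ≤ ∑ k ∈ Kp, w k * ((P k j).re - (P k₀ j).re) := by
    rw [← Finset.sum_filter_add_sum_filter_not Finset.univ
      (fun k => (A i' k).re ≤ (A i k).re)]
    have : ∑ k ∈ Finset.univ.filter (fun k => ¬ (A i' k).re ≤ (A i k).re),
        w k * ((P k j).re - (P k₀ j).re) ≤ 0 := by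
      refine Finset.sum_nonpos fun k hk => ?_
      rw [Finset.mem_filter] at hk
      exact mul_nonpos_of_nonpos_of_nonneg (by simp [hw]; linarith [le_of_not_ge hk.2])
        (by linarith [hk₀ k (Finset.mem_univ k)])
    linarith
  refine hsplit.trans ?_
  calc ∑ k ∈ Kp, w k * ((P k j).re - (P k₀ j).re) ≤ ∑ k ∈ Kp, w k * D := by
        refine Finset.sum_le_sum fun k hk => ?_
        rw [Finset.mem_filter] at hk
        exact mul_le_mul_of_nonneg_left (hdiff k k₀ j) (by simp [hw]; linarith [hk.2])
    _ = (∑ k ∈ Kp, w k) * D := (Finset.sum_mul _ _ _).symm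
    _ ≤ c * D := mul_le_mul_of_nonneg_right (hc i i') hD

/-- positive parts of row differences of a stochastic matrix are `≤ 1`. -/
lemma rowdiff_le_one {d : ℕ} {A : Matrix (Fin d) (Fin d) ℂ} (hA : IsStochC A)
    (i i' : Fin d) : ∑ k ∈ Finset.univ.filter
      (fun k => (A i' k).re ≤ (A i k).re), ((A i k).re - (A i' k).re) ≤ 1 := by
  calc ∑ k ∈ Finset.univ.filter (fun k => (A i' k).re ≤ (A i k).re),
        ((A i k).re - (A i' k).re)
      ≤ ∑ k ∈ Finset.univ.filter (fun k => (A i' k).re ≤ (A i k).re), (A i k).re := by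
        refine Finset.sum_le_sum fun k _ => ?_
        linarith [(hA.1 i' k).2]
    _ ≤ ∑ k, (A i k).re := Finset.sum_le_sum_of_subset_of_nonneg (Finset.filter_subset _ _)
        (fun k _ _ => (hA.1 i k).2)
    _ = 1 := hA.rowsum_re i

/-- positive parts of row differences of an ε-positive stochastic matrix are `≤ 1 - dε`. -/
lemma rowdiff_le_eps {d : ℕ} {A : Matrix (Fin d) (Fin d) ℂ} (hA : IsStochC A)
    {ε : ℝ} (hε : ∀ i j, ε ≤ (A i j).re) (i i' : Fin d) :
    ∑ k ∈ Finset.univ.filter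
      (fun k => (A i' k).re ≤ (A i k).re), ((A i k).re - (A i' k).re) ≤ 1 - d * ε := by
  classical
  set Kp := Finset.univ.filter (fun k => (A i' k).re ≤ (A i k).re) with hKp
  set Kn := Finset.univ.filter (fun k => ¬ (A i' k).re ≤ (A i k).re) with hKn
  have hcard : Kp.card + Kn.card = d := by
    rw [hKp, hKn, Finset.card_filter_add_card_filter_not]
    simp
  have h1 : ∑ k ∈ Kp, (A i k).re = 1 - ∑ k ∈ Kn, (A i k).re := by
    have := hA.rowsum_re i
    rw [← Finset.sum_filter_add_sum_filter_not Finset.univ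
      (fun k => (A i' k).re ≤ (A i k).re) (fun k => (A i k).re)] at this
    linarith
  have h2 : (Kn.card : ℝ) * ε ≤ ∑ k ∈ Kn, (A i k).re := by
    calc (Kn.card : ℝ) * ε = ∑ _k ∈ Kn, ε := by rw [Finset.sum_const, nsmul_eq_mul]
      _ ≤ ∑ k ∈ Kn, (A i k).re := Finset.sum_le_sum fun k _ => hε i k
  have h3 : (Kp.card : ℝ) * ε ≤ ∑ k ∈ Kp, (A i' k).re := by
    calc (Kp.card : ℝ) * ε = ∑ _k ∈ Kp, ε := by rw [Finset.sum_const, nsmul_eq_mul]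
      _ ≤ ∑ k ∈ Kp, (A i' k).re := Finset.sum_le_sum fun k _ => hε i' k
  have : ∑ k ∈ Kp, ((A i k).re - (A i' k).re)
      = ∑ k ∈ Kp, (A i k).re - ∑ k ∈ Kp, (A i' k).re := Finset.sum_sub_distrib _ _
  rw [this, h1]
  have : ((Kp.card : ℝ) + Kn.card) = d := by exact_mod_cast hcard
  have h4 : (d:ℝ) * ε = Kp.card * ε + Kn.card * ε := by rw [← this]; ring
  linarith









lemma bwdProd_stoch {d : ℕ} {A : ℕ → Matrix (Fin d) (Fin d) ℂ}
    (hA : ∀ n, IsStochC (A n)) (n : ℕ) : IsStochC (bwdProd A n) := by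
  induction n with
  | zero => rw [bwdProd_zero]; exact IsStochC.one
  | succ n ih => rw [bwdProd_succ]; exact (hA n).mul ih

/-- Main deterministic entrywise bound. -/
lemma det_entry_bound {d : ℕ} (hd : 0 < d) (A : ℕ → Matrix (Fin d) (Fin d) ℂ)
    (hA : ∀ n, IsStochC (A n)) {ε r : ℝ} (hr : r = 1 - (d : ℝ) * ε) (hr0 : 0 ≤ r)
    (g : ℕ → Prop) [DecidablePred g] (hg : ∀ n, g n → ∀ i j, ε ≤ (A n i j).re) :
    ∀ n i j,
      ‖(bwdProd A n - ketbra (fun _ => ((Real.sqrt d : ℝ) : ℂ)⁻¹)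
        (fun j => ((Real.sqrt d *
          Filter.liminf (fun m => (bwdProd A m ⟨0, hd⟩ j).re) Filter.atTop : ℝ) : ℂ))) i j‖
      ≤ r ^ (((Finset.range n).filter g).card) := by
  classical
  set P := bwdProd A with hP
  have hPs : ∀ n, IsStochC (P n) := bwdProd_stoch hA
  set D : ℕ → ℝ := fun n => ∏ i ∈ Finset.range n, (if g i then r else 1) with hDdef
  have hD0 : ∀ n, 0 ≤ D n := fun n =>
    Finset.prod_nonneg fun i _ => by split <;> norm_num [hr0]
  have hDpow : ∀ n, D n = r ^ (((Finset.range n).filter g).card) := by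
    intro n
    show (∏ i ∈ Finset.range n, (if g i then r else 1)) = _
    rw [← Finset.prod_filter_mul_prod_filter_not (Finset.range n) g]
    rw [Finset.prod_congr rfl (fun i hi => if_pos (Finset.mem_filter.mp hi).2),
      Finset.prod_congr rfl (fun i hi => if_neg (Finset.mem_filter.mp hi).2)]
    simp
  -- pairwise oscillation bound
  have hosc : ∀ n i i' j, (P n i j).re - (P n i' j).re ≤ D n := by
    intro n
    induction n with
    | zero =>
      intro i i' j
      simp only [hP, bwdProd_zero, hDdef, Finset.range_zero, Finset.prod_empty]
      have h1 := IsStochC.entry_le_one (IsStochC.one (d := d)) i j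
      have h2 := (IsStochC.one (d := d)).1 i' j
      linarith [h2.2]
    | succ n ih =>
      have hstep : ∀ i i' j, ((A n * P n) i j).re - ((A n * P n) i' j).re
          ≤ (if g n then r else 1) * D n := by
        refine contract_core hd (hA n) (hPs n) (hD0 n) ih ?_
        intro i i'
        split
        · rw [hr]; exact rowdiff_le_eps (hA n) (hg n (by assumption)) i i'
        · exact rowdiff_le_one (hA n) i i'
      intro i i' j
      rw [hP, bwdProd_succ]
      have : D (n + 1) = (if g n then r else 1) * D n := by
        show (∏ i ∈ Finset.range (n+1), (if g i then r else 1))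
          = (if g n then r else 1) * ∏ i ∈ Finset.range n, (if g i then r else 1)
        rw [Finset.prod_range_succ, mul_comm]
      rw [this]
      exact hstep i i' j
  -- containment: for m ≥ n, entries of P m are within D n of entries of P n
  have hcont : ∀ n m i i' j,
      |(P (n + m) i j).re - (P n i' j).re| ≤ D n := by
    intro n m i i' j
    have hsplit : P (n + m) = bwdProd (fun i => A (n + i)) m * P n := bwdProd_add A n m
    set Q := bwdProd (fun i => A (n + i)) m with hQ
    have hQs : IsStochC Q := bwdProd_stoch (fun k => hA (n + k)) m
    have hre : (P (n + m) i j).re = ∑ k, (Q i k).re * (P n k j).re := by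
      rw [hsplit]
      exact mul_apply_re (fun a b => (hQs.1 a b).1) (fun a b => ((hPs n).1 a b).1) i j
    rw [abs_le]
    constructor
    · have : ∑ k, (Q i k).re * ((P n i' j).re - D n) ≤ ∑ k, (Q i k).re * (P n k j).re := by
        refine Finset.sum_le_sum fun k _ => ?_
        refine mul_le_mul_of_nonneg_left ?_ (hQs.1 i k).2
        linarith [hosc n i' k j]
      rw [hre]
      have hrow : ∑ k, (Q i k).re * ((P n i' j).re - D n)
          = (P n i' j).re - D n := by
        rw [← Finset.sum_mul, hQs.rowsum_re i, one_mul]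
      linarith
    · have : ∑ k, (Q i k).re * (P n k j).re ≤ ∑ k, (Q i k).re * ((P n i' j).re + D n) := by
        refine Finset.sum_le_sum fun k _ => ?_
        refine mul_le_mul_of_nonneg_left ?_ (hQs.1 i k).2
        linarith [hosc n k i' j]
      rw [hre]
      have hrow : ∑ k, (Q i k).re * ((P n i' j).re + D n)
          = (P n i' j).re + D n := by
        rw [← Finset.sum_mul, hQs.rowsum_re i, one_mul]
      linarith
  -- liminf bound
  set ρ : Fin d → ℝ := fun j => Filter.liminf (fun m => (P m ⟨0, hd⟩ j).re) Filter.atTop with hρ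
  have hliminf : ∀ n i j, |(P n i j).re - ρ j| ≤ D n := by
    intro n i j
    have hev_ub : ∀ᶠ m in atTop, (P m ⟨0, hd⟩ j).re ≤ (P n i j).re + D n := by
      filter_upwards [eventually_ge_atTop n] with m hm
      obtain ⟨k, rfl⟩ := Nat.exists_eq_add_of_le hm
      have := hcont n k ⟨0, hd⟩ i j
      rw [abs_le] at this
      linarith [this.1, this.2]
    have hev_lb : ∀ᶠ m in atTop, (P n i j).re - D n ≤ (P m ⟨0, hd⟩ j).re := by
      filter_upwards [eventually_ge_atTop n] with m hm
      obtain ⟨k, rfl⟩ := Nat.exists_eq_add_of_le hm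
      have := hcont n k ⟨0, hd⟩ i j
      rw [abs_le] at this
      linarith [this.1, this.2]
    have hbdd : IsBoundedUnder (· ≥ ·) atTop (fun m => (P m ⟨0, hd⟩ j).re) :=
      isBoundedUnder_of_eventually_ge hev_lb
    have hcobdd : IsCoboundedUnder (· ≥ ·) atTop (fun m => (P m ⟨0, hd⟩ j).re) :=
      (isBoundedUnder_of_eventually_le hev_ub).isCoboundedUnder_ge
    have h1 : (P n i j).re - D n ≤ ρ j := le_liminf_of_le hcobdd hev_lb
    have h2 : ρ j ≤ (P n i j).re + D n := by
      refine liminf_le_of_le hbdd fun b hb => ?_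
      obtain ⟨m, hm1, hm2⟩ := (hb.and hev_ub).exists
      linarith
    rw [abs_le]; constructor <;> linarith
  -- entry of the difference
  intro n i j
  have hsqd : Real.sqrt d ≠ 0 := by
    positivity
  have hket : ketbra (fun _ => ((Real.sqrt d : ℝ) : ℂ)⁻¹)
      (fun j => ((Real.sqrt d * ρ j : ℝ) : ℂ)) i j = ((ρ j : ℝ) : ℂ) := by
    simp only [ketbra, Matrix.of_apply, Complex.conj_ofReal]
    rw [← Complex.ofReal_inv, ← Complex.ofReal_mul]
    congr 1
    field_simp
  have hentry : (bwdProd A n - ketbra (fun _ => ((Real.sqrt d : ℝ) : ℂ)⁻¹)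
      (fun j => ((Real.sqrt d * ρ j : ℝ) : ℂ))) i j
      = (((P n i j).re - ρ j : ℝ) : ℂ) := by
    have him : (P n i j).im = 0 := ((hPs n).1 i j).1
    have hre : P n i j = ((P n i j).re : ℂ) := Complex.ext rfl (by simp [him])
    rw [Matrix.sub_apply, hket, Complex.ofReal_sub, ← hre]
  rw [hentry, Complex.norm_real, ← hDpow n]
  exact hliminf n i j



lemma prob_part {Ω : Type} [MeasurableSpace Ω] (p : Measure Ω) [IsProbabilityMeasure p]
    (P : Measure (ℕ → Ω)) [IsProbabilityMeasure P] (hP : IsIIDproduct p P)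
    (S : Set Ω) (hS : MeasurableSet S) (hSpos : 0 < p S) :
    ∃ θ : ℝ, 0 < θ ∧ ∃ Ω₄ : Set (ℕ → Ω), MeasurableSet Ω₄ ∧ P Ω₄ = 1 ∧
      ∀ ω' ∈ Ω₄, ∃ N₀ : ℕ, ∀ n, N₀ ≤ n →
        θ * n ≤ ((@Finset.filter _ (fun i => ω' i ∈ S) (Classical.decPred _)
          (Finset.range n)).card : ℝ) := by
  classical
  set a : ℝ := (p S).toReal with ha
  have hpS_ne_top : p S ≠ ⊤ := measure_ne_top p S
  have ha0 : 0 < a := ENNReal.toReal_pos hSpos.ne' hpS_ne_top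
  have ha1 : a ≤ 1 := by
    rw [ha]
    exact ENNReal.toReal_le_of_le_ofReal zero_le_one (by simpa using prob_le_one)
  set b : ℝ := (p Sᶜ).toReal with hb
  have hbval : b = 1 - a := by
    rw [hb, ha, measure_compl hS hpS_ne_top, measure_univ]
    rw [ENNReal.toReal_sub_of_le prob_le_one ENNReal.one_ne_top]
    simp
  set c : ℝ := 1 - a / 2 with hc
  have hc0 : 0 < c := by rw [hc]; linarith
  have hc1 : c < 1 := by rw [hc]; linarith
  set θ : ℝ := (-Real.log c) / (2 * Real.log 2) with hθ
  have hlogc : Real.log c < 0 := Real.log_neg hc0 hc1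
  have hlog2 : 0 < Real.log 2 := Real.log_pos one_lt_two
  have hθ0 : 0 < θ := by
    rw [hθ]
    exact div_pos (by linarith) (by positivity)
  set ρ : ℝ := (2 : ℝ) ^ θ * c with hρ
  have hρ0 : 0 ≤ ρ := by positivity
  have hρ1 : ρ < 1 := by
    rw [hρ]
    have h2θ : (2 : ℝ) ^ θ = Real.exp (θ * Real.log 2) := by
      rw [Real.rpow_def_of_pos two_pos, mul_comm]
    have hcexp : c = Real.exp (Real.log c) := (Real.exp_log hc0).symm
    rw [h2θ]
    have hprod : Real.exp (θ * Real.log 2) * c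
        = Real.exp (θ * Real.log 2 + Real.log c) := by
      rw [Real.exp_add, Real.exp_log hc0]
    rw [hprod]
    have : θ * Real.log 2 + Real.log c = Real.log c / 2 := by
      rw [hθ]; field_simp; ring
    rw [this]
    calc Real.exp (Real.log c / 2) < Real.exp 0 := by
          apply Real.exp_lt_exp.mpr; linarith
      _ = 1 := Real.exp_zero
  -- the bad events
  set T𝒯 : ℕ → Finset (Finset ℕ) := fun N =>
    ((Finset.range N).powerset).filter (fun T => (T.card : ℝ) < θ * N) with hT𝒯
  set R : ℕ → Finset ℕ → Set (ℕ → Ω) := fun N T =>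
    {ω' | ∀ i < N, ω' i ∈ (if i ∈ T then S else Sᶜ)} with hR
  set B : ℕ → Set (ℕ → Ω) := fun N => ⋃ T ∈ T𝒯 N, R N T with hB
  have hRmeas : ∀ N T, MeasurableSet (R N T) := by
    intro N T
    have : R N T = ⋂ i, ⋂ (_ : i < N), (fun ω' : ℕ → Ω => ω' i) ⁻¹' (if i ∈ T then S else Sᶜ) := by
      ext ω'; simp [hR]
    rw [this]
    refine MeasurableSet.iInter fun i => MeasurableSet.iInter fun _ => ?_
    refine (measurable_pi_apply i) ?_
    by_cases h : i ∈ T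
    · simpa [h] using hS
    · simpa [h] using hS.compl
  have hBmeas : ∀ N, MeasurableSet (B N) := fun N =>
    (T𝒯 N).measurableSet_biUnion fun T _ => hRmeas N T
  -- probability of each rectangle
  have hPR : ∀ N, ∀ T ∈ T𝒯 N,
      P (R N T) = ENNReal.ofReal (a ^ T.card * b ^ (N - T.card)) := by
    intro N T hT
    rw [hT𝒯, Finset.mem_filter, Finset.mem_powerset] at hT
    have := hP N (fun i => if i ∈ T then S else Sᶜ)
      (fun i => by
        by_cases h : i ∈ T
        · simpa [h] using hS
        · simpa [h] using hS.compl)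
    simp only [hR]
    rw [show {ω' : ℕ → Ω | ∀ i < N, ω' i ∈ (if i ∈ T then S else Sᶜ)}
      = {ω' : ℕ → Ω | ∀ i < N, ω' i ∈ (fun i => if i ∈ T then S else Sᶜ) i} from rfl, this]
    rw [← Finset.prod_filter_mul_prod_filter_not (Finset.range N) (fun i => i ∈ T)]
    have h1 : (Finset.range N).filter (fun i => i ∈ T) = T := by
      ext i
      simp only [Finset.mem_filter, Finset.mem_range]
      exact ⟨fun h => h.2, fun h => ⟨Finset.mem_range.mp (hT.1 h), h⟩⟩
    rw [h1]
    have h2 : ∏ i ∈ T, p (if i ∈ T then S else Sᶜ) = (p S) ^ T.card := by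
      rw [Finset.prod_congr rfl (fun i hi => by rw [if_pos hi])]
      simp
    have h3 : ∏ i ∈ (Finset.range N).filter (fun i => ¬ i ∈ T), p (if i ∈ T then S else Sᶜ)
        = (p Sᶜ) ^ (N - T.card) := by
      rw [Finset.prod_congr rfl (fun i hi => by
        rw [if_neg (Finset.mem_filter.mp hi).2])]
      rw [Finset.prod_const]
      congr 1
      rw [Finset.filter_not, Finset.card_sdiff_of_subset]
      · rw [h1, Finset.card_range]
      · rw [h1]; exact hT.1
    rw [h2, h3]
    rw [ENNReal.ofReal_mul (by positivity), ENNReal.ofReal_pow ha0.le,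
      ENNReal.ofReal_pow (by rw [hbval]; linarith), ha, hb,
      ENNReal.ofReal_toReal hpS_ne_top, ENNReal.ofReal_toReal (measure_ne_top p Sᶜ)]
  -- bound on the bad event
  have hPB : ∀ N, P (B N) ≤ ENNReal.ofReal (ρ ^ N) := by
    intro N
    calc P (B N) ≤ ∑ T ∈ T𝒯 N, P (R N T) := measure_biUnion_finset_le _ _
      _ = ∑ T ∈ T𝒯 N, ENNReal.ofReal (a ^ T.card * b ^ (N - T.card)) :=
          Finset.sum_congr rfl (hPR N)
      _ = ENNReal.ofReal (∑ T ∈ T𝒯 N, a ^ T.card * b ^ (N - T.card)) :=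
          (ENNReal.ofReal_sum_of_nonneg fun T _ => by
            have hb0 : 0 ≤ b := by rw [hbval]; linarith
            positivity).symm
      _ ≤ ENNReal.ofReal (ρ ^ N) := by
          refine ENNReal.ofReal_le_ofReal ?_
          have hb0 : 0 ≤ b := by rw [hbval]; linarith
          have step1 : ∀ T ∈ T𝒯 N, a ^ T.card * b ^ (N - T.card)
              ≤ (2:ℝ) ^ (θ * N) * ((a/2) ^ T.card * b ^ (N - T.card)) := by
            intro T hT
            rw [hT𝒯, Finset.mem_filter] at hT
            have hcard : (T.card : ℝ) < θ * N := hT.2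
            have h2k : (2:ℝ) ^ T.card ≤ (2:ℝ) ^ (θ * N) := by
              rw [← Real.rpow_natCast 2 T.card]
              exact Real.rpow_le_rpow_of_exponent_le one_le_two hcard.le
            have : a ^ T.card = (2:ℝ) ^ T.card * (a/2) ^ T.card := by
              rw [← mul_pow]; ring_nf
            rw [this]
            have ha2 : (0:ℝ) ≤ (a/2) ^ T.card * b ^ (N - T.card) := by positivity
            nlinarith [h2k, ha2]
          calc ∑ T ∈ T𝒯 N, a ^ T.card * b ^ (N - T.card)
              ≤ ∑ T ∈ T𝒯 N, (2:ℝ) ^ (θ * N) * ((a/2) ^ T.card * b ^ (N - T.card)) :=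
                Finset.sum_le_sum step1
            _ = (2:ℝ) ^ (θ * N) * ∑ T ∈ T𝒯 N, (a/2) ^ T.card * b ^ (N - T.card) := by
                rw [Finset.mul_sum]
            _ ≤ (2:ℝ) ^ (θ * N) * ∑ T ∈ (Finset.range N).powerset,
                  (a/2) ^ T.card * b ^ (N - T.card) := by
                refine mul_le_mul_of_nonneg_left ?_ (by positivity)
                refine Finset.sum_le_sum_of_subset_of_nonneg (Finset.filter_subset _ _)
                  (fun T _ _ => by positivity)
            _ = (2:ℝ) ^ (θ * N) * c ^ N := by
                congr 1
                have hpa := Finset.prod_add (fun _ : ℕ => a/2) (fun _ : ℕ => b) (Finset.range N)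
                simp only [Finset.prod_const, Finset.card_range] at hpa
                have hcab : c ^ N = (a/2 + b) ^ N := by rw [hc, hbval]; ring_nf
                rw [hcab, hpa]
                refine Finset.sum_congr rfl fun T hT => ?_
                rw [Finset.card_sdiff_of_subset (Finset.mem_powerset.mp hT), Finset.card_range]
            _ = ρ ^ N := by
                rw [hρ, mul_pow]
                congr 1
                rw [← Real.rpow_natCast ((2:ℝ) ^ θ) N, ← Real.rpow_mul (by norm_num)]
  -- Borel–Cantelli
  have hsum : ∑' N, P (B N) ≠ ⊤ := by
    have hsummable : Summable (fun N : ℕ => ρ ^ N) :=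
      summable_geometric_of_lt_one hρ0 hρ1
    have : ∑' N, P (B N) ≤ ∑' N : ℕ, ENNReal.ofReal (ρ ^ N) :=
      ENNReal.tsum_le_tsum hPB
    refine ne_top_of_le_ne_top ?_ this
    rw [← ENNReal.ofReal_tsum_of_nonneg (fun N => by positivity) hsummable]
    exact ENNReal.ofReal_ne_top
  have hls : P (Filter.limsup B Filter.atTop) = 0 :=
    MeasureTheory.measure_limsup_atTop_eq_zero hsum
  refine ⟨θ, hθ0, (Filter.limsup B Filter.atTop)ᶜ,
    (MeasurableSet.measurableSet_limsup hBmeas).compl, ?_, ?_⟩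
  · rw [measure_compl (MeasurableSet.measurableSet_limsup hBmeas) (measure_ne_top P _),
      hls, measure_univ]
    simp
  · intro ω' hω'
    rw [Set.mem_compl_iff, mem_limsup_iff_frequently_mem, Filter.not_frequently] at hω'
    rw [Filter.eventually_atTop] at hω'
    obtain ⟨N₀, hN₀⟩ := hω'
    refine ⟨N₀, fun n hn => ?_⟩
    by_contra hcon
    push_neg at hcon
    apply hN₀ n hn
    set T : Finset ℕ := @Finset.filter _ (fun i => ω' i ∈ S) (Classical.decPred _)
      (Finset.range n) with hT
    have hTmem : T ∈ T𝒯 n := by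
      rw [hT𝒯, Finset.mem_filter, Finset.mem_powerset]
      exact ⟨Finset.filter_subset _ _, hcon⟩
    have hωR : ω' ∈ R n T := by
      simp only [hR, Set.mem_setOf_eq]
      intro i hi
      by_cases hiS : ω' i ∈ S
      · rw [if_pos]
        · exact hiS
        · rw [hT, Finset.mem_filter]
          exact ⟨Finset.mem_range.mpr hi, hiS⟩
      · rw [if_neg]
        · exact hiS
        · rw [hT, Finset.mem_filter]
          rintro ⟨-, h⟩
          exact hiS h
    simp only [hB]
    exact Set.mem_biUnion hTmem hωR
lemma opNorm_dim0 (A : Matrix (Fin 0) (Fin 0) ℂ) : opNorm A = 0 := by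
  haveI : Nonempty {v : Fin 0 → ℂ // evnorm v ≤ 1} :=
    ⟨⟨0, by rw [evnorm_zero]; norm_num⟩⟩
  have h : ∀ v : {v : Fin 0 → ℂ // evnorm v ≤ 1}, evnorm (A.mulVec v) = 0 := by
    intro v; simp [evnorm]
  rw [opNorm]
  simp only [h]
  exact ciSup_const

lemma bwdProd_entry_measurable {Ω : Type} [MeasurableSpace Ω] {d : ℕ}
    (M : Ω → Matrix (Fin d) (Fin d) ℂ) (hMmeas : ∀ i j, Measurable fun ω => M ω i j)
    (n : ℕ) (i j : Fin d) :
    Measurable fun ω' : ℕ → Ω => bwdProd (fun k => M (ω' k)) n i j := by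
  induction n generalizing i j with
  | zero => simp only [bwdProd_zero]; exact measurable_const
  | succ n ih =>
    simp only [bwdProd_succ, Matrix.mul_apply]
    refine Finset.measurable_sum _ fun k _ => Measurable.mul ?_ (ih k j)
    exact (hMmeas i k).comp (measurable_pi_apply n)

theorem stmt3
    {Ω : Type} [MeasurableSpace Ω] (p : Measure Ω) [IsProbabilityMeasure p]
    {d : ℕ} (M : Ω → Matrix (Fin d) (Fin d) ℂ)
    (hMmeas : ∀ i j, Measurable fun ω => M ω i j)
    (hstoch : ∀ ω, (∀ i j, (M ω i j).im = 0 ∧ 0 ≤ (M ω i j).re) ∧ ∀ i, ∑ j, M ω i j = 1)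
    (hpos : 0 < p {ω | ∀ i j, 0 < (M ω i j).re})
    (P : Measure (ℕ → Ω)) [IsProbabilityMeasure P] (hP : IsIIDproduct p P) :
    ∃ α : ℝ, 0 < α ∧
      ∃ η : (ℕ → Ω) → Fin d → ℂ, (∀ i, Measurable fun ω' => η ω' i) ∧
        ∃ Ω₄ : Set (ℕ → Ω), MeasurableSet Ω₄ ∧ P Ω₄ = 1 ∧
          ∀ ω' ∈ Ω₄, ∃ C : ℝ, ∀ n : ℕ, 1 ≤ n →
            opNorm (bwdProd (fun i => M (ω' i)) n -
                ketbra (fun _ => ((Real.sqrt d : ℝ) : ℂ)⁻¹) (η ω'))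
              ≤ C * Real.exp (-α * n) := by
  classical
  by_cases hd : 0 < d
  swap
  · have hd0 : d = 0 := by omega
    subst hd0
    refine ⟨1, one_pos, fun _ _ => 0, fun _ => measurable_const, Set.univ,
      MeasurableSet.univ, measure_univ, fun ω' _ => ⟨0, fun n _ => ?_⟩⟩
    rw [opNorm_dim0]
    positivity
  -- main case : d > 0
  set Sk : ℕ → Set Ω := fun k => {ω | ∀ i j, 1/((k:ℝ)+1) ≤ (M ω i j).re} with hSk
  have hSkmeas : ∀ k, MeasurableSet (Sk k) := by
    intro k
    have : Sk k = ⋂ i, ⋂ j, {ω | 1/((k:ℝ)+1) ≤ (M ω i j).re} := by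
      ext ω; simp [hSk, Set.mem_iInter]
    rw [this]
    exact MeasurableSet.iInter fun i => MeasurableSet.iInter fun j =>
      measurableSet_le measurable_const ((Complex.measurable_re).comp (hMmeas i j))
  have hmono : Monotone Sk := by
    intro k l hkl ω hω
    have h1 : 1/((l:ℝ)+1) ≤ 1/((k:ℝ)+1) := by
      apply one_div_le_one_div_of_le (by positivity)
      have : (k:ℝ) ≤ l := by exact_mod_cast hkl
      linarith
    exact fun i j => le_trans h1 (hω i j)
  have hGsub : {ω | ∀ i j, 0 < (M ω i j).re} ⊆ ⋃ k, Sk k := by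
    intro ω hω
    haveI : Nonempty (Fin d) := Fin.pos_iff_nonempty.mp hd
    obtain ⟨⟨i0, j0⟩, -, hmin⟩ := Finset.exists_min_image
      (Finset.univ : Finset (Fin d × Fin d)) (fun q => (M ω q.1 q.2).re)
      Finset.univ_nonempty
    have hm0 : 0 < (M ω i0 j0).re := hω i0 j0
    obtain ⟨k, hk⟩ := exists_nat_one_div_lt hm0
    exact Set.mem_iUnion.mpr ⟨k, fun i j =>
      le_trans hk.le (hmin (i, j) (Finset.mem_univ _))⟩
  have hpos2 : 0 < p (⋃ k, Sk k) := lt_of_lt_of_le hpos (measure_mono hGsub)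
  have hdir : Directed (· ⊆ ·) Sk := hmono.directed_le
  rw [hdir.measure_iUnion] at hpos2
  obtain ⟨k₀, hk₀⟩ := lt_iSup_iff.mp hpos2
  set kk := max k₀ d with hkk
  set S := Sk kk with hSdef
  have hSpos : 0 < p S := lt_of_lt_of_le hk₀ (measure_mono (hmono (le_max_left _ _)))
  set ε : ℝ := 1/((kk:ℝ)+1) with hε
  have hε0 : 0 < ε := by positivity
  have hdε : (d:ℝ) * ε < 1 := by
    have hlt : (d:ℝ) < (kk:ℝ)+1 := by
      exact_mod_cast Nat.lt_succ_of_le (le_max_right k₀ d)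
    rw [hε]
    calc (d:ℝ) * (1/((kk:ℝ)+1)) = (d:ℝ)/((kk:ℝ)+1) := by ring
      _ < 1 := by rw [div_lt_one (by positivity)]; exact hlt
  set r : ℝ := 1 - (d:ℝ) * ε with hrdef
  have hr0 : 0 < r := by rw [hrdef]; linarith
  have hr1 : r < 1 := by
    have hdε0 : 0 < (d:ℝ) * ε := mul_pos (by exact_mod_cast hd) hε0
    rw [hrdef]; linarith
  obtain ⟨θ, hθ0, Ω₄, hΩ₄meas, hΩ₄P, hΩ₄⟩ := prob_part p P hP S (hSkmeas kk) hSpos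
  set α : ℝ := -(θ * Real.log r) with hα
  have hlogr : Real.log r < 0 := Real.log_neg hr0 hr1
  have hα0 : 0 < α := by rw [hα]; nlinarith
  set η : (ℕ → Ω) → Fin d → ℂ := fun ω' j => ((Real.sqrt d * Filter.liminf
      (fun m => (bwdProd (fun i => M (ω' i)) m ⟨0, hd⟩ j).re) Filter.atTop : ℝ) : ℂ) with hη
  refine ⟨α, hα0, η, ?_, Ω₄, hΩ₄meas, hΩ₄P, ?_⟩
  · intro j
    simp only [hη]
    refine Complex.measurable_ofReal.comp (Measurable.const_mul ?_ _)
    exact Measurable.liminf fun m =>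
      Complex.measurable_re.comp (bwdProd_entry_measurable M hMmeas m ⟨0, hd⟩ j)
  · intro ω' hω'
    obtain ⟨N₀, hN₀⟩ := hΩ₄ ω' hω'
    have hA : ∀ n, IsStochC ((fun i => M (ω' i)) n) := fun n => hstoch (ω' n)
    have hgε : ∀ n, (fun n => ω' n ∈ S) n → ∀ i j, ε ≤ (M (ω' n) i j).re :=
      fun n hn i j => hn i j
    have hdet := det_entry_bound hd (fun i => M (ω' i)) hA hrdef hr0.le
      (fun n => ω' n ∈ S) hgε
    have hop : ∀ n, opNorm (bwdProd (fun i => M (ω' i)) n -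
        ketbra (fun _ => ((Real.sqrt d : ℝ) : ℂ)⁻¹) (η ω'))
        ≤ (d:ℝ) * Real.sqrt d *
          r ^ (((Finset.range n).filter (fun i => ω' i ∈ S)).card) := by
      intro n
      refine opNorm_le_of_entries (by positivity) fun i j => ?_
      simp only [hη]
      exact hdet n i j
    set K : ℕ → ℕ := fun n => ((Finset.range n).filter (fun i => ω' i ∈ S)).card with hK
    have hKn : ∀ n, N₀ ≤ n → θ * n ≤ (K n : ℝ) := by
      intro n hn
      have h2 := hN₀ n hn
      simp only [hK]
      convert h2 using 5
    set Dm : ℕ → ℝ := fun n => opNorm (bwdProd (fun i => M (ω' i)) n -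
      ketbra (fun _ => ((Real.sqrt d : ℝ) : ℂ)⁻¹) (η ω')) with hDm
    refine ⟨(∑ m ∈ Finset.range (N₀+1), Dm m * Real.exp (α*m)) + (d:ℝ) * Real.sqrt d,
      fun n _ => ?_⟩
    have hsum_nonneg : 0 ≤ ∑ m ∈ Finset.range (N₀+1), Dm m * Real.exp (α*m) :=
      Finset.sum_nonneg fun m _ => mul_nonneg (opNorm_nonneg _) (Real.exp_pos _).le
    have hdd : (0:ℝ) ≤ (d:ℝ) * Real.sqrt d := by positivity
    by_cases hcase : n ≤ N₀
    · have hterm : Dm n * Real.exp (α*n) ≤ ∑ m ∈ Finset.range (N₀+1), Dm m * Real.exp (α*m) :=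
        Finset.single_le_sum (f := fun m => Dm m * Real.exp (α*m))
          (fun m _ => mul_nonneg (opNorm_nonneg _) (Real.exp_pos _).le)
          (Finset.mem_range.mpr (by omega))
      have hC : Dm n * Real.exp (α*n)
          ≤ (∑ m ∈ Finset.range (N₀+1), Dm m * Real.exp (α*m)) + (d:ℝ) * Real.sqrt d :=
        le_trans hterm (le_add_of_nonneg_right hdd)
      calc Dm n = (Dm n * Real.exp (α*n)) * Real.exp (-α*n) := by
            rw [mul_assoc, ← Real.exp_add,
              show α*(n:ℝ) + -α*(n:ℝ) = 0 by ring, Real.exp_zero, mul_one]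
        _ ≤ _ * Real.exp (-α*n) := mul_le_mul_of_nonneg_right hC (Real.exp_pos _).le
    · push_neg at hcase
      have hKn' : θ * n ≤ (K n : ℝ) := hKn n (by omega)
      have hrK : r ^ (K n) ≤ Real.exp (-α * n) := by
        have hpow : r ^ (K n) = Real.exp ((K n : ℝ) * Real.log r) := by
          rw [← Real.log_pow, Real.exp_log (pow_pos hr0 _)]
        rw [hpow]
        apply Real.exp_le_exp.mpr
        rw [hα]
        nlinarith [mul_nonpos_of_nonneg_of_nonpos (sub_nonneg.mpr hKn') hlogr.le]
      calc Dm n ≤ (d:ℝ) * Real.sqrt d * r ^ (K n) := hop n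
        _ ≤ (d:ℝ) * Real.sqrt d * Real.exp (-α*n) :=
            mul_le_mul_of_nonneg_left hrK hdd
        _ ≤ _ * Real.exp (-α*n) := by
            refine mul_le_mul_of_nonneg_right ?_ (Real.exp_pos _).le
            exact le_add_of_nonneg_left hsum_nonneg

end RRDO
end

section
/- With the notation of the deterministic setting, for every n ≥ 1: Ψₙ = |ψ_S⟩⟨θₙ| + M_{Q₁} M_{Q₂} ⋯ M_{Qₙ}, where θₙ = ψₙ + M_{Qₙ}* ψ_{n−1} + M_{Qₙ}* M_{Q_{n−1}}* ψ_{n−2} + ⋯ + M_{Qₙ}* ⋯ M_{Q₂}* ψ₁, and moreover θₙ = Mₙ* ⋯ M₂* ψ₁ and ⟨ψ_S, θₙ⟩ = 1. -/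
open MeasureTheory Filter Matrix
open scoped BigOperators

namespace RRDO

section Aux

variable {d : ℕ}

private lemma mat_ext {A B : Matrix (Fin d) (Fin d) ℂ}
    (h : ∀ v, A.mulVec v = B.mulVec v) : A = B := by
  ext i j
  have := congrFun (h (Pi.single j 1)) i
  simpa [Matrix.mulVec_single] using this

private lemma einner_conj (a b : Fin d → ℂ) :
    starRingEnd ℂ (einner a b) = einner b a := by
  simp only [einner, map_sum, _root_.map_mul, Complex.conj_conj]
  exact Finset.sum_congr rfl fun i _ => mul_comm _ _

private lemma einner_mulVec (M : Matrix (Fin d) (Fin d) ℂ) (a b : Fin d → ℂ) :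
    einner (M.mulVec a) b = einner a (Mᴴ.mulVec b) := by
  simp only [einner, Matrix.mulVec, dotProduct, Matrix.conjTranspose_apply, map_sum,
    _root_.map_mul, Finset.sum_mul, Finset.mul_sum]
  rw [Finset.sum_comm]
  exact Finset.sum_congr rfl fun i _ => Finset.sum_congr rfl fun j _ => by
    simp only [_root_.map_mul, starRingEnd_apply]; ring

private lemma ketbra_mulVec (a b x : Fin d → ℂ) :
    (ketbra a b).mulVec x = einner b x • a := by
  funext i
  simp only [ketbra, Matrix.mulVec, dotProduct, Matrix.of_apply, einner,
    Pi.smul_apply, smul_eq_mul, Finset.sum_mul]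
  exact Finset.sum_congr rfl fun j _ => by ring

private lemma mul_ketbra (M : Matrix (Fin d) (Fin d) ℂ) (a b : Fin d → ℂ) :
    M * ketbra a b = ketbra (M.mulVec a) b := by
  ext i j
  simp only [ketbra, Matrix.mul_apply, Matrix.of_apply, Matrix.mulVec, dotProduct,
    Finset.sum_mul]
  exact Finset.sum_congr rfl fun k _ => by ring

private lemma ketbra_mul (a b : Fin d → ℂ) (M : Matrix (Fin d) (Fin d) ℂ) :
    ketbra a b * M = ketbra a (Mᴴ.mulVec b) := by
  ext i j
  simp only [ketbra, Matrix.mul_apply, Matrix.of_apply, Matrix.mulVec, dotProduct,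
    Matrix.conjTranspose_apply, map_sum, _root_.map_mul, Finset.mul_sum]
  exact Finset.sum_congr rfl fun k _ => by
    simp only [_root_.map_mul, starRingEnd_apply, star_star]; ring

private lemma ketbra_conjT (a b : Fin d → ℂ) : (ketbra a b)ᴴ = ketbra b a := by
  ext i j
  simp only [ketbra, Matrix.conjTranspose_apply, Matrix.of_apply, starRingEnd_apply,
    star_mul', star_star]
  ring

private lemma ketbra_mul_ketbra (a b c e : Fin d → ℂ) :
    ketbra a b * ketbra c e = einner b c • ketbra a e := by
  ext i j
  simp only [ketbra, Matrix.mul_apply, Matrix.of_apply, einner, Matrix.smul_apply,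
    smul_eq_mul, Finset.sum_mul]
  exact Finset.sum_congr rfl fun k _ => by ring

private lemma ketbra_zero_left (b : Fin d → ℂ) : ketbra (0 : Fin d → ℂ) b = 0 := by
  ext i j
  simp [ketbra]

private lemma mulVec_sum {ι : Type*} (s : Finset ι) (A : Matrix (Fin d) (Fin d) ℂ)
    (f : ι → Fin d → ℂ) :
    A.mulVec (∑ j ∈ s, f j) = ∑ j ∈ s, A.mulVec (f j) := by
  rw [← Matrix.mulVecLin_apply, map_sum]
  simp [Matrix.mulVecLin_apply]

private lemma Nm_nonneg (Nm : (Fin d → ℂ) → ℝ)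
    (hNm0 : ∀ x, Nm x = 0 ↔ x = 0)
    (hNmadd : ∀ x y, Nm (x + y) ≤ Nm x + Nm y)
    (hNmsmul : ∀ (c : ℂ) (x : Fin d → ℂ), Nm (c • x) = ‖c‖ * Nm x)
    (x : Fin d → ℂ) : 0 ≤ Nm x := by
  have h0 : Nm 0 = 0 := (hNm0 0).2 rfl
  have hneg : Nm (-x) = Nm x := by
    have := hNmsmul (-1) x; simpa using this
  have h1 := hNmadd x (-x)
  have h2 : x + -x = 0 := by abel
  rw [h2, h0, hneg] at h1
  linarith

private lemma ker_sq_le (Nm : (Fin d → ℂ) → ℝ)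
    (hNm0 : ∀ x, Nm x = 0 ↔ x = 0)
    (hNmadd : ∀ x y, Nm (x + y) ≤ Nm x + Nm y)
    (hNmsmul : ∀ (c : ℂ) (x : Fin d → ℂ), Nm (c • x) = ‖c‖ * Nm x)
    {M : Matrix (Fin d) (Fin d) ℂ} (hc : ∀ x, Nm (M.mulVec x) ≤ Nm x)
    {v : Fin d → ℂ} (hv : (M - 1).mulVec ((M - 1).mulVec v) = 0) :
    (M - 1).mulVec v = 0 := by
  set w := (M - 1).mulVec v with hw
  have hMv : M.mulVec v = v + w := by
    rw [hw, Matrix.sub_mulVec, Matrix.one_mulVec]; abel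
  have hMw : M.mulVec w = w := by
    rw [Matrix.sub_mulVec, Matrix.one_mulVec, sub_eq_zero] at hv
    exact hv
  have key : ∀ n : ℕ, Nm (v + (n : ℂ) • w) ≤ Nm v := by
    intro n
    induction n with
    | zero => simp
    | succ n ihn =>
      have e : v + ((n + 1 : ℕ) : ℂ) • w = M.mulVec (v + (n : ℂ) • w) := by
        rw [Matrix.mulVec_add, hMv, Matrix.mulVec_smul, hMw]
        push_cast
        rw [add_smul, one_smul]
        abel
      rw [e]
      exact le_trans (hc _) ihn
  show w = 0
  have hge : 0 ≤ Nm w := Nm_nonneg Nm hNm0 hNmadd hNmsmul w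
  rcases eq_or_lt_of_le hge with h | h
  · exact (hNm0 w).1 h.symm
  · exfalso
    obtain ⟨n, hn⟩ := exists_nat_gt ((2 * Nm v) / Nm w)
    have h1 : (n : ℝ) * Nm w ≤ 2 * Nm v := by
      have h2 := hNmadd (v + (n : ℂ) • w) (-v)
      have h3 : (v + (n : ℂ) • w) + -v = (n : ℂ) • w := by abel
      rw [h3] at h2
      have h4 : Nm ((n : ℂ) • w) = (n : ℝ) * Nm w := by
        rw [hNmsmul]; simp
      have h5 : Nm (-v) = Nm v := by
        have := hNmsmul (-1) v; simpa using this
      have h6 := key n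
      rw [h4, h5] at h2
      linarith
    rw [div_lt_iff₀ h] at hn
    linarith

private lemma ker_pow_le (Nm : (Fin d → ℂ) → ℝ)
    (hNm0 : ∀ x, Nm x = 0 ↔ x = 0)
    (hNmadd : ∀ x y, Nm (x + y) ≤ Nm x + Nm y)
    (hNmsmul : ∀ (c : ℂ) (x : Fin d → ℂ), Nm (c • x) = ‖c‖ * Nm x)
    {M : Matrix (Fin d) (Fin d) ℂ} (hc : ∀ x, Nm (M.mulVec x) ≤ Nm x) :
    ∀ (k : ℕ) (v : Fin d → ℂ), ((M - 1) ^ (k + 1)).mulVec v = 0 → (M - 1).mulVec v = 0 := by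
  intro k
  induction k with
  | zero => intro v h; simpa using h
  | succ k ih =>
    intro v h
    have h1 : ((M - 1) ^ (k + 1)).mulVec ((M - 1).mulVec v) = 0 := by
      rw [Matrix.mulVec_mulVec, ← pow_succ]
      exact h
    exact ker_sq_le Nm hNm0 hNmadd hNmsmul hc (ih _ h1)

private lemma pow_ker {M : Matrix (Fin d) (Fin d) ℂ} {v : Fin d → ℂ}
    (h : (M - 1).mulVec v = 0) : ∀ k : ℕ, ((M - 1) ^ (k + 1)).mulVec v = 0 := by
  intro k
  induction k with
  | zero => simpa using h
  | succ k ih =>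
    rw [pow_succ, ← Matrix.mulVec_mulVec, h, Matrix.mulVec_zero]

private lemma pow_d_ker (hd : 0 < d) {M : Matrix (Fin d) (Fin d) ℂ} {v : Fin d → ℂ}
    (h : (M - 1).mulVec v = 0) : ((M - 1) ^ d).mulVec v = 0 := by
  obtain ⟨e, rfl⟩ : ∃ e, d = e + 1 := ⟨d - 1, by omega⟩
  exact pow_ker h e

private lemma ker_pow_d (hd : 0 < d) (Nm : (Fin d → ℂ) → ℝ)
    (hNm0 : ∀ x, Nm x = 0 ↔ x = 0)
    (hNmadd : ∀ x y, Nm (x + y) ≤ Nm x + Nm y)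
    (hNmsmul : ∀ (c : ℂ) (x : Fin d → ℂ), Nm (c • x) = ‖c‖ * Nm x)
    {M : Matrix (Fin d) (Fin d) ℂ} (hc : ∀ x, Nm (M.mulVec x) ≤ Nm x)
    {v : Fin d → ℂ} (h : ((M - 1) ^ d).mulVec v = 0) : (M - 1).mulVec v = 0 := by
  obtain ⟨e, rfl⟩ : ∃ e, d = e + 1 := ⟨d - 1, by omega⟩
  exact ker_pow_le Nm hNm0 hNmadd hNmsmul hc e v h

private lemma isCompl_kr (hd : 0 < d) (Nm : (Fin d → ℂ) → ℝ)
    (hNm0 : ∀ x, Nm x = 0 ↔ x = 0)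
    (hNmadd : ∀ x y, Nm (x + y) ≤ Nm x + Nm y)
    (hNmsmul : ∀ (c : ℂ) (x : Fin d → ℂ), Nm (c • x) = ‖c‖ * Nm x)
    {M : Matrix (Fin d) (Fin d) ℂ} (hc : ∀ x, Nm (M.mulVec x) ≤ Nm x) :
    IsCompl (LinearMap.ker ((M - 1) ^ d).mulVecLin)
      (LinearMap.range ((M - 1) ^ d).mulVecLin) := by
  have hdisj : Disjoint (LinearMap.ker ((M - 1) ^ d).mulVecLin)
      (LinearMap.range ((M - 1) ^ d).mulVecLin) := by
    rw [Submodule.disjoint_def]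
    intro x hx hrange
    obtain ⟨y, hy⟩ := hrange
    rw [LinearMap.mem_ker, Matrix.mulVecLin_apply] at hx
    rw [Matrix.mulVecLin_apply] at hy
    have h2 : ((M - 1) ^ (d + d)).mulVec y = 0 := by
      rw [pow_add, ← Matrix.mulVec_mulVec, hy, hx]
    have h3 : (M - 1).mulVec y = 0 := by
      obtain ⟨e, rfl⟩ : ∃ e, d = e + 1 := ⟨d - 1, by omega⟩
      have h4 : (e + 1) + (e + 1) = (e + e + 1) + 1 := by omega
      rw [h4] at h2
      exact ker_pow_le Nm hNm0 hNmadd hNmsmul hc _ y h2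
    rw [← hy, pow_d_ker hd h3]
  refine ⟨hdisj, ?_⟩
  rw [codisjoint_iff]
  apply Submodule.eq_top_of_disjoint
  · have h1 := LinearMap.finrank_range_add_finrank_ker ((M - 1) ^ d).mulVecLin
    rw [add_comm]
    exact h1.ge
  · exact hdisj

private lemma specProj_mulVec {M : Matrix (Fin d) (Fin d) ℂ}
    (h : IsCompl (LinearMap.ker ((M - 1) ^ d).mulVecLin)
      (LinearMap.range ((M - 1) ^ d).mulVecLin)) (x : Fin d → ℂ) :
    (specProj M).mulVec x =
      ((LinearMap.ker ((M - 1) ^ d).mulVecLin).subtype ∘ₗ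
        Submodule.linearProjOfIsCompl _ _ h) x := by
  unfold specProj
  rw [dif_pos h, ← Matrix.toLin'_apply, Matrix.toLin'_toMatrix']

private lemma specProj_apply {M : Matrix (Fin d) (Fin d) ℂ}
    (h : IsCompl (LinearMap.ker ((M - 1) ^ d).mulVecLin)
      (LinearMap.range ((M - 1) ^ d).mulVecLin))
    {a b : Fin d → ℂ} (ha : a ∈ LinearMap.ker ((M - 1) ^ d).mulVecLin)
    (hb : b ∈ LinearMap.range ((M - 1) ^ d).mulVecLin) :
    (specProj M).mulVec (a + b) = a := by
  rw [specProj_mulVec h, LinearMap.comp_apply, map_add]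
  have h1 : Submodule.linearProjOfIsCompl _ _ h a = ⟨a, ha⟩ :=
    Submodule.projectionOnto_apply_left h ⟨a, ha⟩
  have h2 : Submodule.linearProjOfIsCompl _ _ h b = 0 :=
    Submodule.projectionOnto_apply_of_mem_right h hb
  rw [h1, h2, add_zero]
  rfl

private lemma specProj_apply_ker {M : Matrix (Fin d) (Fin d) ℂ}
    (h : IsCompl (LinearMap.ker ((M - 1) ^ d).mulVecLin)
      (LinearMap.range ((M - 1) ^ d).mulVecLin))
    {a : Fin d → ℂ} (ha : a ∈ LinearMap.ker ((M - 1) ^ d).mulVecLin) :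
    (specProj M).mulVec a = a := by
  have := specProj_apply h ha (Submodule.zero_mem _)
  simpa using this

private lemma specProj_mul {M : Matrix (Fin d) (Fin d) ℂ}
    (h : IsCompl (LinearMap.ker ((M - 1) ^ d).mulVecLin)
      (LinearMap.range ((M - 1) ^ d).mulVecLin))
    (hflat : ∀ v, ((M - 1) ^ d).mulVec v = 0 → (M - 1).mulVec v = 0) :
    specProj M * M = specProj M := by
  apply mat_ext
  intro x
  rw [← Matrix.mulVec_mulVec]
  have hx : x ∈ (⊤ : Submodule ℂ (Fin d → ℂ)) := trivial
  rw [← h.sup_eq_top] at hx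
  obtain ⟨k, hk, r, hr, rfl⟩ := Submodule.mem_sup.1 hx
  have hMk : M.mulVec k = k := by
    have h1 : (M - 1).mulVec k = 0 := by
      apply hflat
      rw [LinearMap.mem_ker, Matrix.mulVecLin_apply] at hk
      exact hk
    rw [Matrix.sub_mulVec, Matrix.one_mulVec, sub_eq_zero] at h1
    exact h1
  have hMr : M.mulVec r ∈ LinearMap.range ((M - 1) ^ d).mulVecLin := by
    obtain ⟨y, hy⟩ := hr
    rw [Matrix.mulVecLin_apply] at hy
    refine ⟨M.mulVec y, ?_⟩
    rw [Matrix.mulVecLin_apply, Matrix.mulVec_mulVec]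
    have hcomm : (M - 1) ^ d * M = M * (M - 1) ^ d := by
      have hc1 : Commute M ((M - 1) ^ d) :=
        (Commute.sub_right (Commute.refl M) (Commute.one_right M)).pow_right d
      exact hc1.symm
    rw [hcomm, ← Matrix.mulVec_mulVec, hy]
  have hMx : M.mulVec (k + r) = k + M.mulVec r := by
    rw [Matrix.mulVec_add, hMk]
  rw [hMx, specProj_apply h hk hMr, specProj_apply h hk hr]

private lemma einner_self_one {ψS : Fin d → ℂ} (hψS : evnorm ψS = 1) :
    einner ψS ψS = 1 := by
  have hnn : 0 ≤ ∑ i, ‖ψS i‖ ^ 2 := Finset.sum_nonneg fun i _ => sq_nonneg _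
  have hsum : ∑ i, ‖ψS i‖ ^ 2 = 1 := by
    unfold evnorm at hψS
    nlinarith [Real.sq_sqrt hnn]
  have hterm : ∀ i, starRingEnd ℂ (ψS i) * ψS i = ((‖ψS i‖ ^ 2 : ℝ) : ℂ) := by
    intro i
    rw [mul_comm, Complex.mul_conj]
    norm_cast
    rw [← Complex.sq_norm]
  unfold einner
  rw [Finset.sum_congr rfl fun i _ => hterm i]
  rw [← Complex.ofReal_sum, hsum, Complex.ofReal_one]

private lemma key_facts (hd : 0 < d) (ψS : Fin d → ℂ) (hψS : evnorm ψS = 1)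
    (Nm : (Fin d → ℂ) → ℝ)
    (hNm0 : ∀ x, Nm x = 0 ↔ x = 0)
    (hNmadd : ∀ x y, Nm (x + y) ≤ Nm x + Nm y)
    (hNmsmul : ∀ (c : ℂ) (x : Fin d → ℂ), Nm (c • x) = ‖c‖ * Nm x)
    (A : Matrix (Fin d) (Fin d) ℂ) (hc : ∀ x, Nm (A.mulVec x) ≤ Nm x)
    (hfixA : A.mulVec ψS = ψS) :
    Aᴴ.mulVec (psiv ψS A) = psiv ψS A ∧ einner ψS (psiv ψS A) = 1 ∧
      MQm ψS A = A - ketbra ψS (psiv ψS A) ∧ (MQm ψS A).mulVec ψS = 0 := by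
  have h := isCompl_kr hd Nm hNm0 hNmadd hNmsmul hc
  have hmem : ψS ∈ LinearMap.ker ((A - 1) ^ d).mulVecLin := by
    rw [LinearMap.mem_ker, Matrix.mulVecLin_apply]
    apply pow_d_ker hd
    rw [Matrix.sub_mulVec, Matrix.one_mulVec, hfixA, sub_self]
  have hE1 : (specProj A).mulVec ψS = ψS := specProj_apply_ker h hmem
  have hEM : specProj A * A = specProj A :=
    specProj_mul h fun v hv => ker_pow_d hd Nm hNm0 hNmadd hNmsmul hc hv
  have hfix' : Aᴴ.mulVec (psiv ψS A) = psiv ψS A := by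
    unfold psiv
    rw [Matrix.mulVec_mulVec, ← Matrix.conjTranspose_mul, hEM]
  have hinner : einner ψS (psiv ψS A) = 1 := by
    unfold psiv
    rw [← einner_mulVec, hE1, einner_self_one hψS]
  have hinner' : einner (psiv ψS A) ψS = 1 := by
    rw [← einner_conj ψS, hinner]
    simp
  have hMQ : MQm ψS A = A - ketbra ψS (psiv ψS A) := by
    unfold MQm
    have hPA : ketbra ψS (psiv ψS A) * A = ketbra ψS (psiv ψS A) := by
      rw [ketbra_mul, hfix']
    have hAP : A * ketbra ψS (psiv ψS A) = ketbra ψS (psiv ψS A) := by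
      rw [mul_ketbra, hfixA]
    have hPP : ketbra ψS (psiv ψS A) * ketbra ψS (psiv ψS A) = ketbra ψS (psiv ψS A) := by
      rw [ketbra_mul_ketbra, hinner', one_smul]
    rw [sub_mul, one_mul, hPA, mul_sub, mul_one, sub_mul, hAP, hPP]
    abel
  have hMQ0 : (MQm ψS A).mulVec ψS = 0 := by
    rw [hMQ, Matrix.sub_mulVec, hfixA, ketbra_mulVec, hinner', one_smul, sub_self]
  exact ⟨hfix', hinner, hMQ, hMQ0⟩

private lemma fwdProd_zero (A : ℕ → Matrix (Fin d) (Fin d) ℂ) : fwdProd A 0 = 1 := by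
  simp [fwdProd]

private lemma fwdProd_succ (A : ℕ → Matrix (Fin d) (Fin d) ℂ) (n : ℕ) :
    fwdProd A (n + 1) = fwdProd A n * A n := by
  simp [fwdProd, List.range_succ]

end Aux

theorem stmt4
    {d : ℕ} (Mf : ℕ → Matrix (Fin d) (Fin d) ℂ)
    (ψS : Fin d → ℂ) (hψS : evnorm ψS = 1)
    (Nm : (Fin d → ℂ) → ℝ)
    (hNm0 : ∀ x, Nm x = 0 ↔ x = 0)
    (hNmadd : ∀ x y, Nm (x + y) ≤ Nm x + Nm y)
    (hNmsmul : ∀ (c : ℂ) (x : Fin d → ℂ), Nm (c • x) = ‖c‖ * Nm x)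
    (hcontr : ∀ j x, Nm ((Mf j).mulVec x) ≤ Nm x)
    (hfix : ∀ j, (Mf j).mulVec ψS = ψS)
    :
    ∀ m : ℕ,
      fwdProd Mf (m + 1)
        = ketbra ψS (thetaSeq Mf ψS m) + fwdProd (fun i => MQm ψS (Mf i)) (m + 1) ∧
      thetaSeq Mf ψS m
        = ∑ j ∈ Finset.range (m + 1),
            ((((List.range' (j + 1) (m - j)).reverse).map
                fun i => (MQm ψS (Mf i))ᴴ).prod).mulVec (psiv ψS (Mf j)) ∧
      einner ψS (thetaSeq Mf ψS m) = 1 := by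
  have hd : 0 < d := by
    rcases Nat.eq_zero_or_pos d with h0 | h
    · exfalso; subst h0; simp [evnorm] at hψS
    · exact h
  have KF := fun j => key_facts hd ψS hψS Nm hNm0 hNmadd hNmsmul (Mf j) (hcontr j) (hfix j)
  intro m
  induction m with
  | zero =>
    refine ⟨?_, ?_, ?_⟩
    · rw [fwdProd_succ, fwdProd_succ, fwdProd_zero, fwdProd_zero, one_mul, one_mul]
      show Mf 0 = ketbra ψS (psiv ψS (Mf 0)) + MQm ψS (Mf 0)
      rw [(KF 0).2.2.1]
      abel
    · show psiv ψS (Mf 0) = _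
      rw [Finset.sum_range_one]
      simp
    · exact (KF 0).2.1
  | succ m ih =>
    obtain ⟨ih1, ih2, ih3⟩ := ih
    have hdecomp : Mf (m + 1) = ketbra ψS (psiv ψS (Mf (m + 1))) + MQm ψS (Mf (m + 1)) := by
      rw [(KF (m + 1)).2.2.1]
      abel
    have hR0 : (fwdProd (fun i => MQm ψS (Mf i)) (m + 1)).mulVec ψS = 0 := by
      rw [fwdProd_succ, ← Matrix.mulVec_mulVec, (KF m).2.2.2, Matrix.mulVec_zero]
    refine ⟨?_, ?_, ?_⟩
    · rw [fwdProd_succ, ih1, add_mul, ketbra_mul]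
      have h2 : fwdProd (fun i => MQm ψS (Mf i)) (m + 1) * Mf (m + 1)
          = fwdProd (fun i => MQm ψS (Mf i)) (m + 1 + 1) := by
        conv_lhs => rw [hdecomp]
        rw [mul_add]
        have h3 : fwdProd (fun i => MQm ψS (Mf i)) (m + 1) * ketbra ψS (psiv ψS (Mf (m + 1)))
            = 0 := by
          rw [mul_ketbra, hR0, ketbra_zero_left]
        rw [h3, zero_add, fwdProd_succ (fun i => MQm ψS (Mf i)) (m + 1)]
      rw [h2]
      rfl
    · show (Mf (m + 1))ᴴ.mulVec (thetaSeq Mf ψS m) = _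
      have hMH : (Mf (m + 1))ᴴ
          = ketbra (psiv ψS (Mf (m + 1))) ψS + (MQm ψS (Mf (m + 1)))ᴴ := by
        conv_lhs => rw [hdecomp]
        rw [Matrix.conjTranspose_add, ketbra_conjT]
      rw [hMH, Matrix.add_mulVec, ketbra_mulVec, ih3, one_smul, ih2, mulVec_sum]
      conv_rhs => rw [Finset.sum_range_succ]
      have hlast : (((List.range' (m + 1 + 1) (m + 1 - (m + 1))).reverse).map
          fun i => (MQm ψS (Mf i))ᴴ).prod = (1 : Matrix (Fin d) (Fin d) ℂ) := by
        simp
      rw [hlast, Matrix.one_mulVec, add_comm]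
      congr 1
      apply Finset.sum_congr rfl
      intro j hj
      have hj' : j ≤ m := Nat.lt_succ_iff.1 (Finset.mem_range.1 hj)
      rw [Matrix.mulVec_mulVec]
      congr 1
      have h1 : m + 1 - j = (m - j) + 1 := by omega
      rw [h1, List.range'_concat]
      have h2 : j + 1 + 1 * (m - j) = m + 1 := by omega
      rw [h2, List.reverse_append]
      simp
    · show einner ψS ((Mf (m + 1))ᴴ.mulVec (thetaSeq Mf ψS m)) = 1
      rw [← einner_mulVec, hfix (m + 1), ih3]


end RRDO
end
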